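/- arXiv:1904.05697 — 4 statements merged into one kernel-verified Lean document; each statement's English description precedes it below -/
import Mathlib

section
/- In the exact WKB recursion the following holds: for every compact convex set K ⊆ Ω containing z₀, setting L = diam(K) and A_K = (sup_{ζ∈K}|ℋ(ζ)|)·max(1, e^{2L/ε}), there is a constant C>0 such that |w^±_n(z)| ≤ C (A_K L)^n / n! for all z∈K and all n≥0; consequently the series Σ_{n≥0} w^±_{2n} and Σ_{n≥0} w^±_{2n+1} converge absolutely and uniformly on K. -/
open Complex Filter Set intervalIntegral

noncomputable section

/-- The exact WKB recursion: `w 0 ≡ 1`; for odd index `2k+1`,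
`w_{2k+1}(z) = ∫_{[z₀,z]} e^{s·2(ζ-z)/ε} ℋ(ζ) w_{2k}(ζ) dζ`, and for even index
`2k+2`, `w_{2k+2}(z) = ∫_{[z₀,z]} ℋ(ζ) w_{2k+1}(ζ) dζ`, all integrals along the
straight segment from `z₀` to `z` (parameterized by `t ∈ [0,1]`); the sign `±`
is encoded by `s = 1` or `s = -1`. -/
def wkbW (H : ℂ → ℂ) (z₀ : ℂ) (ε : ℝ) (s : ℂ) : ℕ → ℂ → ℂ
  | 0 => fun _ => 1
  | n + 1 => fun z =>
      if n % 2 = 0 then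
        (z - z₀) * ∫ t in (0:ℝ)..1,
          Complex.exp (s * 2 * ((z₀ + (t : ℂ) * (z - z₀)) - z) / (ε : ℂ)) *
            H (z₀ + (t : ℂ) * (z - z₀)) * wkbW H z₀ ε s n (z₀ + (t : ℂ) * (z - z₀))
      else
        (z - z₀) * ∫ t in (0:ℝ)..1,
          H (z₀ + (t : ℂ) * (z - z₀)) * wkbW H z₀ ε s n (z₀ + (t : ℂ) * (z - z₀))

/-- Factorial bounds for the exact WKB recursion and absolute,
uniform convergence of the even and odd series on any compact convex `K ⊆ Ω`
containing the base point. -/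
theorem wkb_series_converges
    (Ω : Set ℂ) (hΩopen : IsOpen Ω) (hΩbdd : Bornology.IsBounded Ω)
    (hΩconv : Convex ℝ Ω)
    (H : ℂ → ℂ) (hH : DifferentiableOn ℂ H Ω) (hHbdd : ∃ M, ∀ ζ ∈ Ω, ‖H ζ‖ ≤ M)
    (z₀ : ℂ) (hz₀ : z₀ ∈ Ω) (ε : ℝ) (hε : 0 < ε) (s : ℂ) (hs : s = 1 ∨ s = -1)
    (K : Set ℂ) (hK : IsCompact K) (hKconv : Convex ℝ K) (hKΩ : K ⊆ Ω)
    (hz₀K : z₀ ∈ K)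
    (L AK : ℝ) (hL : L = Metric.diam K)
    (hAK : AK = sSup ((fun ζ => ‖H ζ‖) '' K) * max 1 (Real.exp (2 * L / ε))) :
    ∃ C : ℝ, 0 < C ∧
      (∀ n : ℕ, ∀ z ∈ K,
        ‖wkbW H z₀ ε s n z‖ ≤ C * (AK * L) ^ n / n.factorial) ∧
      (∀ z ∈ K, Summable (fun n : ℕ => ‖wkbW H z₀ ε s (2 * n) z‖)) ∧
      (∀ z ∈ K, Summable (fun n : ℕ => ‖wkbW H z₀ ε s (2 * n + 1) z‖)) ∧
      TendstoUniformlyOn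
        (fun N z => ∑ n ∈ Finset.range N, wkbW H z₀ ε s (2 * n) z)
        (fun z => ∑' n : ℕ, wkbW H z₀ ε s (2 * n) z) atTop K ∧
      TendstoUniformlyOn
        (fun N z => ∑ n ∈ Finset.range N, wkbW H z₀ ε s (2 * n + 1) z)
        (fun z => ∑' n : ℕ, wkbW H z₀ ε s (2 * n + 1) z) atTop K := by
  set M₀ := sSup ((fun ζ => ‖H ζ‖) '' K) with hM₀
  set E := max 1 (Real.exp (2 * L / ε)) with hE
  have hHc : ContinuousOn H K := (hH.continuousOn).mono hKΩ
  have hbdd : BddAbove ((fun ζ => ‖H ζ‖) '' K) :=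
    (hK.image_of_continuousOn (continuous_norm.comp_continuousOn hHc)).bddAbove
  have hMle : ∀ ζ ∈ K, ‖H ζ‖ ≤ M₀ := fun ζ hζ => le_csSup hbdd ⟨ζ, hζ, rfl⟩
  have hM0 : 0 ≤ M₀ := le_trans (norm_nonneg _) (hMle z₀ hz₀K)
  have hE1 : (1:ℝ) ≤ E := le_max_left _ _
  have hAK0 : 0 ≤ AK := by rw [hAK]; positivity
  have hL0 : 0 ≤ L := hL ▸ Metric.diam_nonneg
  have hdist : ∀ z ∈ K, ∀ w ∈ K, ‖z - w‖ ≤ L := by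
    intro z hz w hw
    rw [hL, ← Complex.dist_eq]
    exact Metric.dist_le_diam_of_mem hK.isBounded hz hw
  have hsabs : ‖s‖ = 1 := by rcases hs with h | h <;> simp [h]
  -- segment membership
  have hseg : ∀ z ∈ K, ∀ t : ℝ, 0 ≤ t → t ≤ 1 → z₀ + (t:ℂ) * (z - z₀) ∈ K := by
    intro z hz t ht0 ht1
    have := hKconv hz₀K hz (by linarith : (0:ℝ) ≤ 1 - t) ht0 (by ring)
    convert this using 1
    simp only [Complex.real_smul]
    push_cast
    ring
  -- exponential bound
  have hexp : ∀ z ∈ K, ∀ ζ ∈ K,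
      ‖Complex.exp (s * 2 * (ζ - z) / (ε : ℂ))‖ ≤ E := by
    intro z hz ζ hζ
    rw [Complex.norm_exp]
    refine le_trans ?_ (le_max_right _ _)
    apply Real.exp_le_exp.2
    refine le_trans (Complex.re_le_norm _) ?_
    rw [norm_div, norm_mul, norm_mul, hsabs]
    simp only [Complex.norm_two, Complex.norm_real, Real.norm_eq_abs, one_mul, abs_of_pos hε]
    have h := hdist ζ hζ z hz
    gcongr
  -- the key factorial bound
  have key : ∀ n, ∀ z ∈ K, ‖wkbW H z₀ ε s n z‖ ≤
      (AK * ‖z - z₀‖) ^ n / n.factorial := by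
    intro n
    induction n with
    | zero => intro z hz; simp [wkbW]
    | succ n ih =>
      intro z hz
      set X := ‖z - z₀‖ with hX
      have hX0 : 0 ≤ X := norm_nonneg _
      -- bound for the integrands
      have hbound : ∀ t : ℝ, t ∈ Set.uIoc (0:ℝ) 1 →
          ∀ c : ℂ, ‖c‖ ≤ E * M₀ →
          ‖c * wkbW H z₀ ε s n (z₀ + (t:ℂ) * (z - z₀))‖ ≤
            AK ^ (n+1) * X ^ n / n.factorial * t ^ n := by
        intro t ht c hc
        rw [Set.uIoc_of_le zero_le_one] at ht
        obtain ⟨ht0, ht1⟩ := ht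
        have hζK : z₀ + (t:ℂ) * (z - z₀) ∈ K := hseg z hz t ht0.le ht1
        have hw := ih _ hζK
        have habs : ‖(z₀ + (t:ℂ) * (z - z₀)) - z₀‖ = t * X := by
          rw [add_sub_cancel_left, norm_mul, Complex.norm_real, Real.norm_of_nonneg ht0.le]
        rw [habs] at hw
        rw [norm_mul]
        calc ‖c‖ * ‖wkbW H z₀ ε s n (z₀ + (t:ℂ) * (z - z₀))‖
            ≤ (E * M₀) * ((AK * (t * X)) ^ n / n.factorial) := by
              apply mul_le_mul hc hw (norm_nonneg _)
              positivity
          _ = AK ^ (n+1) * X ^ n / n.factorial * t ^ n := by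
              rw [hAK, hM₀, hE]
              rw [mul_pow, mul_pow]
              ring
      have hgint : IntervalIntegrable
          (fun t : ℝ => AK ^ (n+1) * X ^ n / n.factorial * t ^ n) MeasureTheory.volume 0 1 :=
        (Continuous.intervalIntegrable (by continuity) 0 1)
      have hgval : (∫ t in (0:ℝ)..1, AK ^ (n+1) * X ^ n / n.factorial * t ^ n) =
          AK ^ (n+1) * X ^ n / n.factorial / (n+1) := by
        rw [intervalIntegral.integral_const_mul, integral_pow]
        push_cast
        ring
      have hfinal : ∀ I : ℂ, ‖I‖ ≤ |∫ t in (0:ℝ)..1,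
            AK ^ (n+1) * X ^ n / n.factorial * t ^ n| →
          ‖(z - z₀) * I‖ ≤ (AK * X) ^ (n+1) / (n+1).factorial := by
        intro I hI
        rw [norm_mul]
        rw [hgval, _root_.abs_of_nonneg (show (0:ℝ) ≤ AK ^ (n+1) * X ^ n / n.factorial / (n+1) by positivity)] at hI
        calc X * ‖I‖ ≤ X * (AK ^ (n+1) * X ^ n / n.factorial / (n+1)) := by
              apply mul_le_mul_of_nonneg_left hI hX0
          _ = (AK * X) ^ (n+1) / (n+1).factorial := by
              rw [Nat.factorial_succ, mul_pow]
              have hn : (n.factorial : ℝ) ≠ 0 := Nat.cast_ne_zero.2 n.factorial_ne_zero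
              have hn1 : (n : ℝ) + 1 ≠ 0 := by positivity
              push_cast
              field_simp
              ring
      rw [wkbW]
      split_ifs with hpar
      · apply hfinal
        apply intervalIntegral.norm_integral_le_abs_of_norm_le ?_ hgint
        apply (MeasureTheory.ae_restrict_mem measurableSet_uIoc).mono
        intro t ht
        apply hbound t ht
        rw [norm_mul]
        exact mul_le_mul (hexp z hz _ (hseg z hz t
          (by rw [Set.uIoc_of_le zero_le_one] at ht; exact ht.1.le)
          (by rw [Set.uIoc_of_le zero_le_one] at ht; exact ht.2)))
          (hMle _ (hseg z hz t
            (by rw [Set.uIoc_of_le zero_le_one] at ht; exact ht.1.le)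
            (by rw [Set.uIoc_of_le zero_le_one] at ht; exact ht.2)))
          (norm_nonneg _) (by positivity)
      · apply hfinal
        apply intervalIntegral.norm_integral_le_abs_of_norm_le ?_ hgint
        apply (MeasureTheory.ae_restrict_mem measurableSet_uIoc).mono
        intro t ht
        apply hbound t ht
        calc ‖H (z₀ + (t:ℂ) * (z - z₀))‖ ≤ M₀ :=
              hMle _ (hseg z hz t
                (by rw [Set.uIoc_of_le zero_le_one] at ht; exact ht.1.le)
                (by rw [Set.uIoc_of_le zero_le_one] at ht; exact ht.2))
          _ ≤ E * M₀ := by nlinarith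
  -- final bound with L
  have keyL : ∀ n, ∀ z ∈ K, ‖wkbW H z₀ ε s n z‖ ≤ (AK * L) ^ n / n.factorial := by
    intro n z hz
    refine (key n z hz).trans ?_
    have h2 : (AK * ‖z - z₀‖) ^ n ≤ (AK * L) ^ n :=
      pow_le_pow_left₀ (by positivity) (mul_le_mul_of_nonneg_left (hdist z hz z₀ hz₀K) hAK0) n
    gcongr
  have hsum : Summable (fun n : ℕ => (AK * L) ^ n / (n.factorial : ℝ)) :=
    Real.summable_pow_div_factorial _
  have hinj2 : Function.Injective (fun n : ℕ => 2 * n) := fun a b h => by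
    have h' : 2 * a = 2 * b := h
    omega
  have hinj2' : Function.Injective (fun n : ℕ => 2 * n + 1) := fun a b h => by
    have h' : 2 * a + 1 = 2 * b + 1 := h
    omega
  have hsum2 : Summable (fun n : ℕ => (AK * L) ^ (2 * n) / ((2 * n).factorial : ℝ)) :=
    hsum.comp_injective hinj2
  have hsum2' : Summable (fun n : ℕ => (AK * L) ^ (2 * n + 1) / ((2 * n + 1).factorial : ℝ)) :=
    hsum.comp_injective hinj2'
  refine ⟨1, one_pos, ?_, ?_, ?_, ?_, ?_⟩
  · intro n z hz
    rw [one_mul]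
    exact keyL n z hz
  · intro z hz
    exact Summable.of_nonneg_of_le (fun n => norm_nonneg _)
      (fun n => keyL (2 * n) z hz) hsum2
  · intro z hz
    exact Summable.of_nonneg_of_le (fun n => norm_nonneg _)
      (fun n => keyL (2 * n + 1) z hz) hsum2'
  · exact tendstoUniformlyOn_tsum_nat hsum2
      (fun n z hz => by exact keyL (2 * n) z hz)
  · exact tendstoUniformlyOn_tsum_nat hsum2'
      (fun n z hz => by exact keyL (2 * n + 1) z hz)
end
end

section
/- In the exact WKB recursion with the + sign, fix z₁∈Ω with Re z₁ > Re z₀. Then for every N∈ℕ there exists a constant C_N > 0 such that for all ε∈(0,1]: |w⁺_even(z₁) − Σ_{n=0}^{N−1} w⁺_{2n}(z₁)| ≤ C_N ε^N and |w⁺_odd(z₁) − Σ_{n=0}^{N−1} w⁺_{2n+1}(z₁)| ≤ C_N ε^N. In particular w⁺_even(z₁) = 1 + O(ε) and w⁺_odd(z₁) = O(ε) as ε→0. -/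
open Complex Filter Set intervalIntegral

noncomputable section

lemma wkbW_odd (H : ℂ → ℂ) (z₀ : ℂ) (ε : ℝ) (s : ℂ) (n : ℕ) (z : ℂ) :
    wkbW H z₀ ε s (2*n+1) z = (z - z₀) * ∫ t in (0:ℝ)..1,
      Complex.exp (s * 2 * ((z₀ + (t : ℂ) * (z - z₀)) - z) / (ε : ℂ)) *
        H (z₀ + (t : ℂ) * (z - z₀)) * wkbW H z₀ ε s (2*n) (z₀ + (t : ℂ) * (z - z₀)) := by
  rw [wkbW]
  simp [Nat.mul_mod_right]

lemma wkbW_even (H : ℂ → ℂ) (z₀ : ℂ) (ε : ℝ) (s : ℂ) (n : ℕ) (z : ℂ) :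
    wkbW H z₀ ε s (2*n+2) z = (z - z₀) * ∫ t in (0:ℝ)..1,
      H (z₀ + (t : ℂ) * (z - z₀)) * wkbW H z₀ ε s (2*n+1) (z₀ + (t : ℂ) * (z - z₀)) := by
  rw [show 2*n+2 = (2*n+1)+1 from rfl, wkbW]
  simp [Nat.add_mod, Nat.mul_mod_right]

lemma exp_int (k : ℝ) (hk : 0 < k) :
    ∫ u in (0:ℝ)..1, Real.exp (k*(u-1)) = (1 - Real.exp (-k))/k := by
  have h : ∀ u ∈ uIcc (0:ℝ) 1, HasDerivAt (fun u => Real.exp (k*(u-1))/k)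
      (Real.exp (k*(u-1))) u := by
    intro u _
    have h1 : HasDerivAt (fun u : ℝ => k*(u-1)) k u := by
      simpa using ((hasDerivAt_id u).sub_const 1).const_mul k
    have h2 := h1.exp.div_const k
    rwa [mul_div_assoc, div_self hk.ne', mul_one] at h2
  rw [intervalIntegral.integral_eq_sub_of_hasDerivAt h
    ((Real.continuous_exp.comp (by continuity)).intervalIntegrable 0 1)]
  simp
  ring

variable {Ω : Set ℂ} {H : ℂ → ℂ} {z₀ z₁ : ℂ} {M ε : ℝ}

lemma wkb_seg (hΩconv : Convex ℝ Ω) (hz₀ : z₀ ∈ Ω) (hz₁ : z₁ ∈ Ω) (t : ℝ) (h0 : 0 ≤ t) (h1 : t ≤ 1) : z₀ + (t:ℂ)*(z₁ - z₀) ∈ Ω := by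
  have h2 := hΩconv hz₀ hz₁ (by linarith : (0:ℝ) ≤ 1 - t) h0 (by ring)
  convert h2 using 1
  simp [Complex.real_smul]
  push_cast
  ring

set_option maxHeartbeats 1000000 in
lemma wkb_oddstep (hΩconv : Convex ℝ Ω) (hz₀ : z₀ ∈ Ω) (hz₁ : z₁ ∈ Ω)
    (hprog : z₀.re < z₁.re)
    (hM1 : (1:ℝ) ≤ M) (hM : ∀ ζ ∈ Ω, ‖H ζ‖ ≤ M)
    (hε : 0 < ε) (n : ℕ)
    (hP : ∀ t : ℝ, 0 ≤ t → t ≤ 1 →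
      ‖wkbW H z₀ ε 1 (2*n) (z₀ + (t:ℂ)*(z₁-z₀))‖
        ≤ (‖z₁-z₀‖^2*M^2/(2*(z₁.re-z₀.re))*ε*t)^n / (Nat.factorial n : ℝ)) :
    ∀ t : ℝ, 0 ≤ t → t ≤ 1 →
      ‖wkbW H z₀ ε 1 (2*n+1) (z₀ + (t:ℂ)*(z₁-z₀))‖
        ≤ (‖z₁-z₀‖*M/(2*(z₁.re-z₀.re)))*ε*
          ((‖z₁-z₀‖^2*M^2/(2*(z₁.re-z₀.re))*ε*t)^n / (Nat.factorial n : ℝ)) := by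
  set r : ℝ := z₁.re - z₀.re with hrdef
  have hr : 0 < r := sub_pos.2 hprog
  set L : ℝ := ‖z₁ - z₀‖ with hLdef
  have hrL : r ≤ L := by
    calc r = (z₁ - z₀).re := by simp [hrdef, Complex.sub_re]
    _ ≤ |(z₁ - z₀).re| := le_abs_self _
    _ ≤ L := Complex.abs_re_le_norm _
  have hL : 0 < L := lt_of_lt_of_le hr hrL
  have hM0 : (0:ℝ) < M := lt_of_lt_of_le one_pos hM1
  set A : ℝ := L^2*M^2/(2*r) with hAdef
  have hA : 0 < A := by positivity
  set c : ℝ := L*M/(2*r) with hcdef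
  have hc : 0 < c := by positivity
  intro t ht0 ht1
  rcases eq_or_lt_of_le ht0 with h0 | h0
  · rw [wkbW_odd]
    have : z₀ + (t:ℂ)*(z₁-z₀) - z₀ = 0 := by rw [← h0]; simp
    rw [this]
    simp only [zero_mul, norm_zero]
    positivity
  · rw [wkbW_odd, norm_mul]
    have hz : (z₀ + (t:ℂ)*(z₁-z₀)) - z₀ = (t:ℂ)*(z₁-z₀) := by ring
    rw [hz]
    have habs : ‖(t:ℂ)*(z₁-z₀)‖ = t*L := by
      rw [norm_mul, Complex.norm_real, Real.norm_eq_abs, _root_.abs_of_nonneg ht0]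
    rw [habs]
    set k : ℝ := 2*t*r/ε with hkdef
    have hk : 0 < k := by positivity
    have hexp1 : Real.exp (-k) ≤ 1 := Real.exp_le_one_iff.2 (by linarith)
    have hIb : ‖∫ u in (0:ℝ)..1,
        Complex.exp (1 * 2 * ((z₀ + (u:ℂ)*((t:ℂ)*(z₁-z₀))) - (z₀ + (t:ℂ)*(z₁-z₀))) / (ε:ℂ)) *
          H (z₀ + (u:ℂ)*((t:ℂ)*(z₁-z₀))) *
          wkbW H z₀ ε 1 (2*n) (z₀ + (u:ℂ)*((t:ℂ)*(z₁-z₀)))‖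
        ≤ |∫ u in (0:ℝ)..1, Real.exp (k*(u-1)) * (M * ((A*ε*t)^n / (Nat.factorial n : ℝ)))| := by
      apply intervalIntegral.norm_integral_le_abs_of_norm_le
      · refine (MeasureTheory.ae_restrict_mem measurableSet_uIoc).mono ?_
        intro u hu
        rw [Set.uIoc_of_le (zero_le_one)] at hu
        obtain ⟨hu0, hu1⟩ := hu
        have hut : z₀ + (u:ℂ)*((t:ℂ)*(z₁-z₀)) = z₀ + ((u*t : ℝ):ℂ)*(z₁-z₀) := by
          push_cast; ring
        have hut0 : 0 ≤ u*t := by positivity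
        have hut1 : u*t ≤ 1 := by nlinarith
        rw [hut, norm_mul, norm_mul]
        have harg : (1:ℂ) * 2 * ((z₀ + ((u*t:ℝ):ℂ)*(z₁-z₀)) - (z₀ + (t:ℂ)*(z₁-z₀))) / (ε:ℂ)
            = (((2*(u-1)*t/ε : ℝ)):ℂ) * (z₁ - z₀) := by
          have : (ε:ℂ) ≠ 0 := by exact_mod_cast hε.ne'
          push_cast
          field_simp
          ring
        have hexpabs : ‖Complex.exp ((1:ℂ) * 2 *
            ((z₀ + ((u*t:ℝ):ℂ)*(z₁-z₀)) - (z₀ + (t:ℂ)*(z₁-z₀))) / (ε:ℂ))‖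
            = Real.exp (k*(u-1)) := by
          rw [harg, Complex.norm_exp]
          congr 1
          rw [Complex.re_ofReal_mul]
          rw [hkdef]
          have h5 : (z₁ - z₀).re = r := by simp [hrdef, Complex.sub_re]
          rw [h5]
          field_simp
        rw [hexpabs]
        have hH' : ‖H (z₀ + ((u*t:ℝ):ℂ)*(z₁-z₀))‖ ≤ M :=
          hM _ (wkb_seg hΩconv hz₀ hz₁ (u*t) hut0 hut1)
        have hw : ‖wkbW H z₀ ε 1 (2*n) (z₀ + ((u*t:ℝ):ℂ)*(z₁-z₀))‖
            ≤ (A*ε*t)^n / (Nat.factorial n : ℝ) := by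
          refine (hP (u*t) hut0 hut1).trans ?_
          have h2 : A*ε*(u*t) ≤ A*ε*t :=
            mul_le_mul_of_nonneg_left (by nlinarith : u*t ≤ t) (by positivity)
          gcongr <;> positivity
        have hmm := mul_le_mul (mul_le_mul le_rfl hH' (norm_nonneg _)
                (Real.exp_nonneg _)) hw (norm_nonneg _) (by positivity :
                (0:ℝ) ≤ Real.exp (k*(u-1)) * M)
        exact hmm.trans (le_of_eq (mul_assoc _ _ _))
      · exact ((Real.continuous_exp.comp (by continuity)).mul continuous_const).intervalIntegrable 0 1
    have hIval : ∫ u in (0:ℝ)..1, Real.exp (k*(u-1)) * (M * ((A*ε*t)^n / (Nat.factorial n : ℝ)))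
        = ((1 - Real.exp (-k))/k) * (M * ((A*ε*t)^n / (Nat.factorial n : ℝ))) := by
      rw [intervalIntegral.integral_mul_const, exp_int k hk]
    rw [hIval] at hIb
    have habs2 : |((1 - Real.exp (-k))/k) * (M * ((A*ε*t)^n / (Nat.factorial n : ℝ)))|
        = ((1 - Real.exp (-k))/k) * (M * ((A*ε*t)^n / (Nat.factorial n : ℝ))) := by
      apply _root_.abs_of_nonneg
      have h1 : 0 ≤ 1 - Real.exp (-k) := by linarith
      positivity
    rw [habs2] at hIb
    calc t * L * ‖∫ u in (0:ℝ)..1, _‖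
        ≤ t * L * (((1 - Real.exp (-k))/k) * (M * ((A*ε*t)^n / (Nat.factorial n : ℝ)))) := by
          apply mul_le_mul_of_nonneg_left hIb (by positivity)
      _ ≤ t * L * ((1/k) * (M * ((A*ε*t)^n / (Nat.factorial n : ℝ)))) := by
          gcongr
          linarith [Real.exp_nonneg (-k)]
      _ = c*ε*((A*ε*t)^n / (Nat.factorial n : ℝ)) := by
          rw [hkdef, hcdef]
          field_simp

set_option maxHeartbeats 1000000 in
lemma wkb_evenstep (hΩconv : Convex ℝ Ω) (hz₀ : z₀ ∈ Ω) (hz₁ : z₁ ∈ Ω)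
    (hprog : z₀.re < z₁.re)
    (hM1 : (1:ℝ) ≤ M) (hM : ∀ ζ ∈ Ω, ‖H ζ‖ ≤ M)
    (hε : 0 < ε) (n : ℕ)
    (hQ : ∀ t : ℝ, 0 ≤ t → t ≤ 1 →
      ‖wkbW H z₀ ε 1 (2*n+1) (z₀ + (t:ℂ)*(z₁-z₀))‖
        ≤ (‖z₁-z₀‖*M/(2*(z₁.re-z₀.re)))*ε*
          ((‖z₁-z₀‖^2*M^2/(2*(z₁.re-z₀.re))*ε*t)^n / (Nat.factorial n : ℝ))) :
    ∀ t : ℝ, 0 ≤ t → t ≤ 1 →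
      ‖wkbW H z₀ ε 1 (2*(n+1)) (z₀ + (t:ℂ)*(z₁-z₀))‖
        ≤ (‖z₁-z₀‖^2*M^2/(2*(z₁.re-z₀.re))*ε*t)^(n+1) / (Nat.factorial (n+1) : ℝ) := by
  set r : ℝ := z₁.re - z₀.re with hrdef
  have hr : 0 < r := sub_pos.2 hprog
  set L : ℝ := ‖z₁ - z₀‖ with hLdef
  have hrL : r ≤ L := by
    calc r = (z₁ - z₀).re := by simp [hrdef, Complex.sub_re]
    _ ≤ |(z₁ - z₀).re| := le_abs_self _
    _ ≤ L := Complex.abs_re_le_norm _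
  have hL : 0 < L := lt_of_lt_of_le hr hrL
  have hM0 : (0:ℝ) < M := lt_of_lt_of_le one_pos hM1
  set A : ℝ := L^2*M^2/(2*r) with hAdef
  have hA : 0 < A := by positivity
  set c : ℝ := L*M/(2*r) with hcdef
  have hc : 0 < c := by positivity
  intro t ht0 ht1
  rw [show 2*(n+1) = 2*n+2 from by ring, wkbW_even, norm_mul]
  have hz : (z₀ + (t:ℂ)*(z₁-z₀)) - z₀ = (t:ℂ)*(z₁-z₀) := by ring
  rw [hz]
  have habs : ‖(t:ℂ)*(z₁-z₀)‖ = t*L := by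
    rw [norm_mul, Complex.norm_real, Real.norm_eq_abs, _root_.abs_of_nonneg ht0]
  rw [habs]
  have hIb : ‖∫ u in (0:ℝ)..1,
      H (z₀ + (u:ℂ)*((t:ℂ)*(z₁-z₀))) *
        wkbW H z₀ ε 1 (2*n+1) (z₀ + (u:ℂ)*((t:ℂ)*(z₁-z₀)))‖
      ≤ |∫ u in (0:ℝ)..1, u^n * (M * (c*ε*((A*ε*t)^n / (Nat.factorial n : ℝ))))| := by
    apply intervalIntegral.norm_integral_le_abs_of_norm_le
    · refine (MeasureTheory.ae_restrict_mem measurableSet_uIoc).mono ?_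
      intro u hu
      rw [Set.uIoc_of_le (zero_le_one)] at hu
      obtain ⟨hu0, hu1⟩ := hu
      have hut : z₀ + (u:ℂ)*((t:ℂ)*(z₁-z₀)) = z₀ + ((u*t : ℝ):ℂ)*(z₁-z₀) := by
        push_cast; ring
      have hut0 : 0 ≤ u*t := by positivity
      have hut1 : u*t ≤ 1 := by nlinarith
      rw [hut, norm_mul]
      have hH' : ‖H (z₀ + ((u*t:ℝ):ℂ)*(z₁-z₀))‖ ≤ M :=
        hM _ (wkb_seg hΩconv hz₀ hz₁ (u*t) hut0 hut1)
      have hw : ‖wkbW H z₀ ε 1 (2*n+1) (z₀ + ((u*t:ℝ):ℂ)*(z₁-z₀))‖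
          ≤ c*ε*((A*ε*t)^n * u^n / (Nat.factorial n : ℝ)) := by
        refine (hQ (u*t) hut0 hut1).trans ?_
        have h3 : (A*ε*(u*t))^n = (A*ε*t)^n * u^n := by rw [← mul_pow]; ring_nf
        rw [h3]
      have hmm := mul_le_mul hH' hw (norm_nonneg _) hM0.le
      exact hmm.trans (le_of_eq (by ring))
    · exact ((continuous_pow n).mul continuous_const).intervalIntegrable 0 1
  have hIval : ∫ u in (0:ℝ)..1, u^n * (M * (c*ε*((A*ε*t)^n / (Nat.factorial n : ℝ))))
      = (1/((n:ℝ)+1)) * (M * (c*ε*((A*ε*t)^n / (Nat.factorial n : ℝ)))) := by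
    rw [intervalIntegral.integral_mul_const, integral_pow]
    norm_num
  rw [hIval] at hIb
  have habs2 : |(1/((n:ℝ)+1)) * (M * (c*ε*((A*ε*t)^n / (Nat.factorial n : ℝ))))|
      = (1/((n:ℝ)+1)) * (M * (c*ε*((A*ε*t)^n / (Nat.factorial n : ℝ)))) := by
    apply _root_.abs_of_nonneg; positivity
  rw [habs2] at hIb
  calc t * L * ‖∫ u in (0:ℝ)..1, _‖
      ≤ t * L * ((1/((n:ℝ)+1)) * (M * (c*ε*((A*ε*t)^n / (Nat.factorial n : ℝ))))) := by
        apply mul_le_mul_of_nonneg_left hIb (by positivity)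
    _ = (A*ε*t)^(n+1) / (Nat.factorial (n+1) : ℝ) := by
        rw [hcdef, hAdef, Nat.factorial_succ]
        push_cast
        field_simp
        ring_nf
        rw [mul_inv_cancel_right₀ hr.ne']

set_option maxHeartbeats 1000000 in
lemma wkb_key (hΩconv : Convex ℝ Ω) (hz₀ : z₀ ∈ Ω) (hz₁ : z₁ ∈ Ω)
    (hprog : z₀.re < z₁.re)
    (hM1 : (1:ℝ) ≤ M) (hM : ∀ ζ ∈ Ω, ‖H ζ‖ ≤ M)
    (hε : 0 < ε) (n : ℕ) :
    (∀ t : ℝ, 0 ≤ t → t ≤ 1 →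
      ‖wkbW H z₀ ε 1 (2*n) (z₀ + (t:ℂ)*(z₁-z₀))‖
        ≤ (‖z₁-z₀‖^2*M^2/(2*(z₁.re-z₀.re))*ε*t)^n / (Nat.factorial n : ℝ)) ∧
    (∀ t : ℝ, 0 ≤ t → t ≤ 1 →
      ‖wkbW H z₀ ε 1 (2*n+1) (z₀ + (t:ℂ)*(z₁-z₀))‖
        ≤ (‖z₁-z₀‖*M/(2*(z₁.re-z₀.re)))*ε*
          ((‖z₁-z₀‖^2*M^2/(2*(z₁.re-z₀.re))*ε*t)^n / (Nat.factorial n : ℝ))) := by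
  induction n with
  | zero =>
    have P0 : ∀ t : ℝ, 0 ≤ t → t ≤ 1 →
        ‖wkbW H z₀ ε 1 (2*0) (z₀ + (t:ℂ)*(z₁-z₀))‖
          ≤ (‖z₁-z₀‖^2*M^2/(2*(z₁.re-z₀.re))*ε*t)^0 / (Nat.factorial 0 : ℝ) := by
      intro t _ _
      simp [wkbW]
    exact ⟨P0, wkb_oddstep hΩconv hz₀ hz₁ hprog hM1 hM hε 0 P0⟩
  | succ n ih =>
    have P := wkb_evenstep hΩconv hz₀ hz₁ hprog hM1 hM hε n ih.2
    exact ⟨P, wkb_oddstep hΩconv hz₀ hz₁ hprog hM1 hM hε (n+1) P⟩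

set_option maxHeartbeats 1000000 in
lemma wkb_tail_bound (g : ℕ → ℂ) (A ε b : ℝ) (hA : 0 < A) (hε : 0 < ε) (hε1 : ε ≤ 1)
    (hb : 0 ≤ b) (N : ℕ)
    (hg : ∀ n, ‖g n‖ ≤ b * ((A*ε)^n / (Nat.factorial n : ℝ))) :
    ‖(∑' n, g n) - ∑ n ∈ Finset.range N, g n‖
      ≤ b * (ε^N * (A^N/(Nat.factorial N : ℝ) * ∑' i : ℕ, A^i/(Nat.factorial i : ℝ))) := by
  have hTs : Summable (fun i : ℕ => A^i / (Nat.factorial i : ℝ)) :=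
    Real.summable_pow_div_factorial A
  have hsum_b : Summable (fun n : ℕ => b * ((A*ε)^n / (Nat.factorial n : ℝ))) :=
    (Real.summable_pow_div_factorial _).mul_left b
  have hsg : Summable g := Summable.of_norm_bounded hsum_b hg
  have hng : Summable (fun n => ‖g n‖) :=
    Summable.of_nonneg_of_le (fun _ => norm_nonneg _) hg hsum_b
  have hchain : ∀ i : ℕ, (A*ε)^(i+N)/(Nat.factorial (i+N) : ℝ)
      ≤ ε^N * (A^N/(Nat.factorial N : ℝ) * (A^i/(Nat.factorial i : ℝ))) := by
    intro i
    have hfac : (Nat.factorial N : ℝ) * (Nat.factorial i : ℝ) ≤ (Nat.factorial (i+N) : ℝ) := by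
      have hd := Nat.factorial_mul_factorial_dvd_factorial_add N i
      rw [add_comm i N]
      exact_mod_cast Nat.le_of_dvd (Nat.factorial_pos _) hd
    calc (A*ε)^(i+N)/(Nat.factorial (i+N) : ℝ)
        = A^(i+N) * ε^(i+N) / (Nat.factorial (i+N) : ℝ) := by rw [mul_pow]
      _ ≤ A^(i+N) * ε^N / (Nat.factorial (i+N) : ℝ) := by
          gcongr A^(i+N) * ?_ / _
          exact pow_le_pow_of_le_one hε.le hε1 (Nat.le_add_left N i)
      _ ≤ A^(i+N) * ε^N / ((Nat.factorial N : ℝ) * (Nat.factorial i : ℝ)) := by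
          gcongr
          try exact hfac
      _ = ε^N * (A^N/(Nat.factorial N : ℝ) * (A^i/(Nat.factorial i : ℝ))) := by
          rw [pow_add]
          field_simp
  have htail : (∑' n, g n) - ∑ n ∈ Finset.range N, g n = ∑' i : ℕ, g (i+N) := by
    rw [← Summable.sum_add_tsum_nat_add N hsg, add_sub_cancel_left]
  rw [htail]
  calc ‖∑' i : ℕ, g (i+N)‖
      ≤ ∑' i : ℕ, ‖g (i+N)‖ := norm_tsum_le_tsum_norm ((summable_nat_add_iff N).2 hng)
    _ ≤ ∑' i : ℕ, b * (ε^N * (A^N/(Nat.factorial N : ℝ) * (A^i/(Nat.factorial i : ℝ)))) := by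
        refine Summable.tsum_le_tsum (fun i => ?_) ((summable_nat_add_iff N).2 hng)
          (((hTs.mul_left _).mul_left _).mul_left b)
        exact (hg (i+N)).trans (mul_le_mul_of_nonneg_left (hchain i) hb)
    _ = b * (ε^N * (A^N/(Nat.factorial N : ℝ) * ∑' i : ℕ, A^i/(Nat.factorial i : ℝ))) := by
        rw [tsum_mul_left, tsum_mul_left, tsum_mul_left]
set_option maxHeartbeats 1000000 in
/-- Along a progressive segment (`Re z₁ > Re z₀`), the even and
odd sums of the exact WKB recursion (sign `+`, i.e. `s = 1`) have complete
asymptotic expansions: for each `N` the tail beyond the first `N` terms is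
`O(ε^N)` uniformly in `ε ∈ (0,1]`; in particular `w⁺_even(z₁) = 1 + O(ε)` and
`w⁺_odd(z₁) = O(ε)`. -/
theorem wkb_asymptotic_expansion
    (Ω : Set ℂ) (hΩopen : IsOpen Ω) (hΩbdd : Bornology.IsBounded Ω)
    (hΩconv : Convex ℝ Ω)
    (H : ℂ → ℂ) (hH : DifferentiableOn ℂ H Ω)
    (hHbdd : ∃ M, ∀ ζ ∈ Ω, ‖H ζ‖ ≤ M)
    (z₀ z₁ : ℂ) (hz₀ : z₀ ∈ Ω) (hz₁ : z₁ ∈ Ω) (hprog : z₀.re < z₁.re) :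
    ∀ N : ℕ, ∃ C : ℝ, 0 < C ∧
      ∀ ε : ℝ, 0 < ε → ε ≤ 1 →
        ‖(∑' n : ℕ, wkbW H z₀ ε 1 (2 * n) z₁) -
            ∑ n ∈ Finset.range N, wkbW H z₀ ε 1 (2 * n) z₁‖ ≤ C * ε ^ N ∧
        ‖(∑' n : ℕ, wkbW H z₀ ε 1 (2 * n + 1) z₁) -
            ∑ n ∈ Finset.range N, wkbW H z₀ ε 1 (2 * n + 1) z₁‖ ≤ C * ε ^ N := by
  intro N
  obtain ⟨M₀, hM₀⟩ := hHbdd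
  set r : ℝ := z₁.re - z₀.re with hrdef
  have hr : 0 < r := sub_pos.2 hprog
  set L : ℝ := ‖z₁ - z₀‖ with hLdef
  have hrL : r ≤ L := by
    calc r = (z₁ - z₀).re := by simp [hrdef, Complex.sub_re]
    _ ≤ |(z₁ - z₀).re| := le_abs_self _
    _ ≤ L := Complex.abs_re_le_norm _
  have hL : 0 < L := lt_of_lt_of_le hr hrL
  set M : ℝ := max M₀ 1 with hMdef
  have hM1 : (1:ℝ) ≤ M := le_max_right _ _
  have hM0 : (0:ℝ) < M := lt_of_lt_of_le one_pos hM1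
  have hM : ∀ ζ ∈ Ω, ‖H ζ‖ ≤ M := fun ζ hζ => (hM₀ ζ hζ).trans (le_max_left _ _)
  set A : ℝ := L^2*M^2/(2*r) with hAdef
  have hA : 0 < A := by positivity
  set c : ℝ := L*M/(2*r) with hcdef
  have hc : 0 < c := by positivity
  have hTs : Summable (fun i : ℕ => A^i / (Nat.factorial i : ℝ)) :=
    Real.summable_pow_div_factorial A
  set T : ℝ := ∑' i : ℕ, A^i / (Nat.factorial i : ℝ) with hTdef
  have hT0 : 0 ≤ T := tsum_nonneg (fun i => by positivity)
  set Ce : ℝ := A^N/(Nat.factorial N : ℝ) * T with hCedef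
  have hCe : 0 ≤ Ce := by positivity
  refine ⟨Ce * (1+c) + 1, by positivity, ?_⟩
  intro ε hε hε1
  have hone : z₀ + ((1:ℝ):ℂ)*(z₁-z₀) = z₁ := by push_cast; ring
  have hbe : ∀ n : ℕ, ‖wkbW H z₀ ε 1 (2*n) z₁‖ ≤ 1 * ((A*ε)^n / (Nat.factorial n : ℝ)) := by
    intro n
    have h := (wkb_key hΩconv hz₀ hz₁ hprog hM1 hM hε n).1 1 zero_le_one le_rfl
    rw [hone] at h
    rw [one_mul]
    refine h.trans (le_of_eq ?_)
    rw [← hLdef, ← hrdef, ← hAdef, mul_one]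
  have hbo : ∀ n : ℕ, ‖wkbW H z₀ ε 1 (2*n+1) z₁‖ ≤ c * ((A*ε)^n / (Nat.factorial n : ℝ)) := by
    intro n
    have h := (wkb_key hΩconv hz₀ hz₁ hprog hM1 hM hε n).2 1 zero_le_one le_rfl
    rw [hone] at h
    refine h.trans ?_
    rw [← hLdef, ← hrdef, ← hAdef, ← hcdef, mul_one]
    calc c*ε*((A*ε)^n / (Nat.factorial n : ℝ))
        ≤ c*1*((A*ε)^n / (Nat.factorial n : ℝ)) := by gcongr
      _ = c * ((A*ε)^n / (Nat.factorial n : ℝ)) := by ring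
  constructor
  · have h := wkb_tail_bound (fun n => wkbW H z₀ ε 1 (2*n) z₁) A ε 1 hA hε hε1
      zero_le_one N hbe
    refine h.trans ?_
    rw [one_mul, ← hTdef, ← hCedef]
    nlinarith [pow_pos hε N, mul_nonneg hCe hc.le]
  · have h := wkb_tail_bound (fun n => wkbW H z₀ ε 1 (2*n+1) z₁) A ε c hA hε hε1
      hc.le N hbo
    refine h.trans ?_
    rw [← hTdef, ← hCedef]
    nlinarith [pow_pos hε N, mul_nonneg hCe hc.le]
end
end

section
/- Let z₀, z₁ ∈ Ω and ε>0. Let w⁺_n(·; z₀) denote the exact WKB recursion with the + sign and base point z₀, and w⁻_n(·; z₁) the recursion with the − sign (kernel e^{−2(ζ−z)/ε}) and base point z₁; write w⁺_even(·;z₀), w⁺_odd(·;z₀), w⁻_even(·;z₁), w⁻_odd(·;z₁) for the corresponding even and odd sums. Then for every z ∈ Ω one has the identity w⁺_odd(z;z₀)·w⁻_odd(z;z₁) − w⁺_even(z;z₀)·w⁻_even(z;z₁) = −w⁺_even(z₁;z₀); in particular the left-hand side is independent of z. (This is the Wronskian formula W(u⁺(·;α,x₀), u⁻(·;α,x₁))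 = 4i·w⁺_even(z₁;z₀) expressed in the z-variable.) -/
open Complex Filter Set intervalIntegral
open Metric MeasureTheory

noncomputable section

/-- The even sum `w_even = Σ w_{2n}` of the exact WKB recursion. -/
def wkbEven (H : ℂ → ℂ) (z₀ : ℂ) (ε : ℝ) (s : ℂ) (z : ℂ) : ℂ :=
  ∑' n : ℕ, wkbW H z₀ ε s (2 * n) z

/-- The odd sum `w_odd = Σ w_{2n+1}` of the exact WKB recursion. -/
def wkbOdd (H : ℂ → ℂ) (z₀ : ℂ) (ε : ℝ) (s : ℂ) (z : ℂ) : ℂ :=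
  ∑' n : ℕ, wkbW H z₀ ε s (2 * n + 1) z

lemma seg_mem {Ω : Set ℂ} (hΩc : Convex ℝ Ω) {z₀ w : ℂ} (hz₀ : z₀ ∈ Ω) (hw : w ∈ Ω)
    {t : ℝ} (ht0 : 0 ≤ t) (ht1 : t ≤ 1) : z₀ + (t : ℂ) * (w - z₀) ∈ Ω := by
  have := hΩc hz₀ hw (by linarith : (0:ℝ) ≤ 1 - t) ht0 (by ring)
  convert this using 1
  simp only [Complex.real_smul]
  push_cast
  ring

lemma hasDerivAt_segment_primitive {Ω : Set ℂ} (hΩo : IsOpen Ω) (hΩc : Convex ℝ Ω)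
    {f : ℂ → ℂ} (hf : DifferentiableOn ℂ f Ω) {z₀ z : ℂ} (hz₀ : z₀ ∈ Ω) (hz : z ∈ Ω) :
    HasDerivAt (fun w => (w - z₀) * ∫ t in (0:ℝ)..1, f (z₀ + (t:ℂ) * (w - z₀))) (f z) z := by
  have hfa : AnalyticOnNhd ℂ f Ω := hf.analyticOnNhd hΩo
  have hf' : DifferentiableOn ℂ (deriv f) Ω := (hfa.deriv).differentiableOn
  have hfc : ContinuousOn f Ω := hf.continuousOn
  have hf'c : ContinuousOn (deriv f) Ω := hf'.continuousOn
  obtain ⟨δ, δpos, hδ⟩ := Metric.isOpen_iff.mp hΩo z hz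
  set r := δ / 2 with hr
  have rpos : 0 < r := by positivity
  have hball : closedBall z r ⊆ Ω := fun x hx => hδ (by simp only [mem_ball]; have := mem_closedBall.mp hx; rw [hr] at this; linarith)
  -- the compact set of all relevant segment points
  set φ : ℝ × ℂ → ℂ := fun p => z₀ + (p.1 : ℂ) * (p.2 - z₀) with hφ
  have hφc : Continuous φ := by fun_prop
  set K : Set ℂ := φ '' (Icc (0:ℝ) 1 ×ˢ closedBall z r) with hK
  have hKcpt : IsCompact K := (isCompact_Icc.prod (isCompact_closedBall z r)).image hφc
  have hKΩ : K ⊆ Ω := by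
    rintro x ⟨⟨t, w⟩, ⟨ht, hw⟩, rfl⟩
    exact seg_mem hΩc hz₀ (hball hw) ht.1 ht.2
  obtain ⟨C, hC⟩ := hKcpt.exists_bound_of_continuousOn (hf'c.mono hKΩ)
  -- membership helper
  have hmem : ∀ w ∈ closedBall z r, ∀ t ∈ Icc (0:ℝ) 1, z₀ + (t:ℂ) * (w - z₀) ∈ Ω :=
    fun w hw t ht => seg_mem hΩc hz₀ (hball hw) ht.1 ht.2
  have hmemK : ∀ w ∈ closedBall z r, ∀ t ∈ Icc (0:ℝ) 1, z₀ + (t:ℂ) * (w - z₀) ∈ K :=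
    fun w hw t ht => ⟨(t, w), ⟨ht, hw⟩, rfl⟩
  -- continuity in t
  have hcont : ∀ w ∈ closedBall z r, ContinuousOn (fun t : ℝ => f (z₀ + (t:ℂ) * (w - z₀))) (Icc 0 1) := by
    intro w hw
    exact hfc.comp (by fun_prop) (fun t ht => hmem w hw t ht)
  have hmeas : ∀ w ∈ closedBall z r,
      AEStronglyMeasurable (fun t : ℝ => f (z₀ + (t:ℂ) * (w - z₀))) (volume.restrict (Set.uIoc (0:ℝ) 1)) := by
    intro w hw
    rw [Set.uIoc_of_le (by norm_num : (0:ℝ) ≤ 1)]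
    exact ((hcont w hw).mono Ioc_subset_Icc_self).aestronglyMeasurable measurableSet_Ioc
  -- derivative of the integral
  have hG : HasDerivAt (fun w => ∫ t in (0:ℝ)..1, f (z₀ + (t:ℂ) * (w - z₀)))
      (∫ t in (0:ℝ)..1, deriv f (z₀ + (t:ℂ) * (z - z₀)) * (t:ℂ)) z := by
    refine (intervalIntegral.hasDerivAt_integral_of_dominated_loc_of_deriv_le
      (F := fun w t => f (z₀ + (t:ℂ) * (w - z₀)))
      (F' := fun w t => deriv f (z₀ + (t:ℂ) * (w - z₀)) * (t:ℂ))
      (bound := fun _ => |C|) (Metric.ball_mem_nhds z rpos) ?_ ?_ ?_ ?_ ?_ ?_).2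
    · filter_upwards [Metric.closedBall_mem_nhds z rpos] with w hw using hmeas w hw
    · exact ((hcont z (mem_closedBall_self rpos.le)).mono
        (by rw [Set.uIcc_of_le (by norm_num : (0:ℝ)≤1)])).intervalIntegrable
    · rw [Set.uIoc_of_le (by norm_num : (0:ℝ) ≤ 1)]
      refine ContinuousOn.aestronglyMeasurable ?_ measurableSet_Ioc
      refine ContinuousOn.mul ?_ (by fun_prop)
      exact (hf'c.comp (by fun_prop) (fun t (ht : t ∈ Ioc (0:ℝ) 1) =>
        hmem z (mem_closedBall_self rpos.le) t (Ioc_subset_Icc_self ht)))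
    · rw [Set.uIoc_of_le (by norm_num : (0:ℝ) ≤ 1)]
      refine Filter.Eventually.of_forall (fun t => fun ht w hw => ?_)
      have ht' : t ∈ Icc (0:ℝ) 1 := Ioc_subset_Icc_self ht
      have hx := hC _ (hmemK w (ball_subset_closedBall hw) t ht')
      calc ‖deriv f (z₀ + (t:ℂ) * (w - z₀)) * (t:ℂ)‖
          = ‖deriv f (z₀ + (t:ℂ) * (w - z₀))‖ * |t| := by
            rw [norm_mul]; simp [Complex.norm_real]
        _ ≤ C * 1 := by
            refine mul_le_mul hx ?_ (abs_nonneg t) ((norm_nonneg _).trans hx)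
            rw [abs_le]; constructor <;> [linarith [ht'.1]; linarith [ht'.2]]
        _ ≤ |C| := by rw [mul_one]; exact le_abs_self C
    · exact intervalIntegrable_const
    · rw [Set.uIoc_of_le (by norm_num : (0:ℝ) ≤ 1)]
      refine Filter.Eventually.of_forall (fun t ht w hw => ?_)
      have ht' : t ∈ Icc (0:ℝ) 1 := Ioc_subset_Icc_self ht
      have hin : z₀ + (t:ℂ) * (w - z₀) ∈ Ω := hmem w (ball_subset_closedBall hw) t ht'
      have hfd : HasDerivAt f (deriv f (z₀ + (t:ℂ) * (w - z₀))) (z₀ + (t:ℂ) * (w - z₀)) :=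
        ((hf.differentiableAt (hΩo.mem_nhds hin)).hasDerivAt)
      have hlin : HasDerivAt (fun w : ℂ => z₀ + (t:ℂ) * (w - z₀)) (t:ℂ) w := by
        simpa using (((hasDerivAt_id w).sub_const z₀).const_mul (t:ℂ)).const_add z₀
      exact hfd.comp w hlin
  -- product rule
  have hP := ((hasDerivAt_id z).sub_const z₀).mul hG
  simp only [one_mul, id_eq] at hP
  -- FTC computation
  have hIcc : Set.uIcc (0:ℝ) 1 = Icc 0 1 := Set.uIcc_of_le (by norm_num)
  have hmemz : ∀ t ∈ Icc (0:ℝ) 1, z₀ + (t:ℂ) * (z - z₀) ∈ Ω :=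
    fun t ht => seg_mem hΩc hz₀ hz ht.1 ht.2
  have hderiv_t : ∀ t ∈ Icc (0:ℝ) 1,
      HasDerivAt (fun t : ℝ => (t:ℂ) * f (z₀ + (t:ℂ) * (z - z₀)))
        (f (z₀ + (t:ℂ) * (z - z₀)) + (t:ℂ) * ((z - z₀) • deriv f (z₀ + (t:ℂ) * (z - z₀)))) t := by
    intro t ht
    have h1 : HasDerivAt (fun t : ℝ => (t:ℂ)) 1 t := by
      have := Complex.ofRealCLM.hasDerivAt (x := t); simp at this; exact this
    have hγ : HasDerivAt (fun t : ℝ => z₀ + (t:ℂ) * (z - z₀)) (z - z₀) t := by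
      simpa using (h1.mul_const (z - z₀)).const_add z₀
    have hfd : HasDerivAt f (deriv f (z₀ + (t:ℂ) * (z - z₀))) (z₀ + (t:ℂ) * (z - z₀)) :=
      (hf.differentiableAt (hΩo.mem_nhds (hmemz t ht))).hasDerivAt
    have h2 : HasDerivAt (fun t : ℝ => f (z₀ + (t:ℂ) * (z - z₀)))
        ((z - z₀) • deriv f (z₀ + (t:ℂ) * (z - z₀))) t := hfd.scomp t hγ
    have := h1.mul h2; simp at this; exact this
  have hcont1 : ContinuousOn (fun t : ℝ => f (z₀ + (t:ℂ) * (z - z₀))) (Icc 0 1) :=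
    hfc.comp (by fun_prop) hmemz
  have hcont2 : ContinuousOn (fun t : ℝ => deriv f (z₀ + (t:ℂ) * (z - z₀))) (Icc 0 1) :=
    hf'c.comp (by fun_prop) hmemz
  have hint1 : IntervalIntegrable (fun t : ℝ => f (z₀ + (t:ℂ) * (z - z₀))) volume 0 1 :=
    (hcont1.mono (by rw [hIcc])).intervalIntegrable
  have hint2 : IntervalIntegrable
      (fun t : ℝ => (t:ℂ) * ((z - z₀) • deriv f (z₀ + (t:ℂ) * (z - z₀)))) volume 0 1 := by
    refine ContinuousOn.intervalIntegrable ?_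
    rw [hIcc]
    exact (Complex.continuous_ofReal.continuousOn).mul (hcont2.const_smul (z - z₀))
  have hFTC := intervalIntegral.integral_eq_sub_of_hasDerivAt
      (fun t ht => hderiv_t t (by rwa [hIcc] at ht)) (hint1.add hint2)
  rw [intervalIntegral.integral_add hint1 hint2] at hFTC
  simp only [Complex.ofReal_one, Complex.ofReal_zero, one_mul, zero_mul, mul_one, sub_zero] at hFTC
  have heq2 : (∫ t in (0:ℝ)..1, (t:ℂ) * ((z - z₀) • deriv f (z₀ + (t:ℂ) * (z - z₀))))
      = (z - z₀) * ∫ t in (0:ℝ)..1, deriv f (z₀ + (t:ℂ) * (z - z₀)) * (t:ℂ) := by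
    rw [← intervalIntegral.integral_const_mul]
    refine intervalIntegral.integral_congr (fun t _ => ?_)
    simp only [smul_eq_mul]; ring
  rw [heq2] at hFTC
  have : z₀ + (z - z₀) = z := by ring
  rw [this] at hFTC
  rw [← hFTC]
  exact hP

/-- The derivative of `wkbW n`. -/
def wkbD (H : ℂ → ℂ) (z₀ : ℂ) (ε : ℝ) (s : ℂ) : ℕ → ℂ → ℂ
  | 0 => fun _ => 0
  | n + 1 => fun z =>
      if n % 2 = 0 then
        H z * wkbW H z₀ ε s n z - s * 2 / (ε:ℂ) * wkbW H z₀ ε s (n + 1) z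
      else H z * wkbW H z₀ ε s n z

lemma wkbW_succ_even (H : ℂ → ℂ) (z₀ : ℂ) (ε : ℝ) (s : ℂ) {n : ℕ} (hn : n % 2 = 0) (z : ℂ) :
    wkbW H z₀ ε s (n + 1) z =
      Complex.exp (-(s * 2 * z / (ε:ℂ))) *
        ((z - z₀) * ∫ t in (0:ℝ)..1,
          Complex.exp (s * 2 * (z₀ + (t:ℂ) * (z - z₀)) / (ε:ℂ)) *
            (H (z₀ + (t:ℂ) * (z - z₀)) * wkbW H z₀ ε s n (z₀ + (t:ℂ) * (z - z₀)))) := by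
  show (if n % 2 = 0 then _ else _) = _
  rw [if_pos hn]
  have h1 : ∀ t : ℝ,
      Complex.exp (s * 2 * ((z₀ + (t:ℂ) * (z - z₀)) - z) / (ε:ℂ)) *
          H (z₀ + (t:ℂ) * (z - z₀)) * wkbW H z₀ ε s n (z₀ + (t:ℂ) * (z - z₀)) =
        Complex.exp (-(s * 2 * z / (ε:ℂ))) *
          (Complex.exp (s * 2 * (z₀ + (t:ℂ) * (z - z₀)) / (ε:ℂ)) *
            (H (z₀ + (t:ℂ) * (z - z₀)) * wkbW H z₀ ε s n (z₀ + (t:ℂ) * (z - z₀)))) := by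
    intro t
    rw [← mul_assoc (Complex.exp _), ← Complex.exp_add,
      show -(s * 2 * z / (ε:ℂ)) + s * 2 * (z₀ + (t:ℂ) * (z - z₀)) / (ε:ℂ)
        = s * 2 * (z₀ + (t:ℂ) * (z - z₀) - z) / (ε:ℂ) from by ring]
    ring
  simp only [h1]
  rw [intervalIntegral.integral_const_mul]
  ring

lemma wkbW_hasDerivAt {Ω : Set ℂ} (hΩo : IsOpen Ω) (hΩc : Convex ℝ Ω)
    {H : ℂ → ℂ} (hH : DifferentiableOn ℂ H Ω) {z₀ : ℂ} (hz₀ : z₀ ∈ Ω) (ε : ℝ) (s : ℂ) :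
    ∀ n, ∀ z ∈ Ω, HasDerivAt (wkbW H z₀ ε s n) (wkbD H z₀ ε s n z) z := by
  intro n
  induction n with
  | zero =>
    intro z hz
    simpa [wkbW, wkbD] using hasDerivAt_const z (1:ℂ)
  | succ n IH =>
    intro z hz
    have hwd : DifferentiableOn ℂ (wkbW H z₀ ε s n) Ω :=
      fun w hw => ((IH w hw).differentiableAt).differentiableWithinAt
    rcases Nat.even_or_odd n with he | ho
    · -- n even : odd-index step, with exponential kernel
      have hn : n % 2 = 0 := Nat.even_iff.mp he
      have hg : DifferentiableOn ℂ
          (fun ζ => Complex.exp (s * 2 * ζ / (ε:ℂ)) * (H ζ * wkbW H z₀ ε s n ζ)) Ω := by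
        refine DifferentiableOn.mul ?_ (hH.mul hwd)
        exact (Complex.differentiable_exp.comp (by fun_prop)).differentiableOn
      have hP := hasDerivAt_segment_primitive hΩo hΩc hg hz₀ hz
      have hE : HasDerivAt (fun w : ℂ => Complex.exp (-(s * 2 * w / (ε:ℂ))))
          (-(s * 2 / (ε:ℂ)) * Complex.exp (-(s * 2 * z / (ε:ℂ)))) z := by
        have hlin : HasDerivAt (fun w : ℂ => -(s * 2 * w / (ε:ℂ))) (-(s * 2 / (ε:ℂ))) z := by
          have := ((hasDerivAt_id z).const_mul (s * 2 / (ε:ℂ))).neg; simp [mul_comm, mul_div_assoc] at this ⊢; exact this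
        have := (Complex.hasDerivAt_exp _).comp z hlin; simp [mul_comm] at this ⊢; exact this
      have hprod := hE.mul hP
      have hfun : wkbW H z₀ ε s (n + 1) = fun w : ℂ =>
          Complex.exp (-(s * 2 * w / (ε:ℂ))) *
            ((w - z₀) * ∫ t in (0:ℝ)..1,
              Complex.exp (s * 2 * (z₀ + (t:ℂ) * (w - z₀)) / (ε:ℂ)) *
                (H (z₀ + (t:ℂ) * (w - z₀)) * wkbW H z₀ ε s n (z₀ + (t:ℂ) * (w - z₀)))) :=
        funext (wkbW_succ_even H z₀ ε s hn)
    -- derivative value rewriting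
      rw [hfun]
      have hval : -(s * 2 / (ε:ℂ)) * Complex.exp (-(s * 2 * z / (ε:ℂ))) *
            ((z - z₀) * ∫ t in (0:ℝ)..1,
              Complex.exp (s * 2 * (z₀ + (t:ℂ) * (z - z₀)) / (ε:ℂ)) *
                (H (z₀ + (t:ℂ) * (z - z₀)) * wkbW H z₀ ε s n (z₀ + (t:ℂ) * (z - z₀)))) +
          Complex.exp (-(s * 2 * z / (ε:ℂ))) *
            (Complex.exp (s * 2 * z / (ε:ℂ)) * (H z * wkbW H z₀ ε s n z)) =
          wkbD H z₀ ε s (n + 1) z := by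
        show _ = (if n % 2 = 0 then _ else _)
        rw [if_pos hn, wkbW_succ_even H z₀ ε s hn z, ← mul_assoc (Complex.exp _),
          ← Complex.exp_add]
        simp only [neg_add_cancel, Complex.exp_zero, one_mul]
        ring
      rw [← hval]
      exact hprod
    · -- n odd : even-index step, plain integrand
      have hn : ¬ n % 2 = 0 := by rw [Nat.odd_iff] at ho; omega
      have hg : DifferentiableOn ℂ (fun ζ => H ζ * wkbW H z₀ ε s n ζ) Ω := hH.mul hwd
      have hP := hasDerivAt_segment_primitive hΩo hΩc hg hz₀ hz
      have hfun : wkbW H z₀ ε s (n + 1) = fun w : ℂ =>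
          (w - z₀) * ∫ t in (0:ℝ)..1,
            H (z₀ + (t:ℂ) * (w - z₀)) * wkbW H z₀ ε s n (z₀ + (t:ℂ) * (w - z₀)) := by
        funext w
        show (if n % 2 = 0 then _ else _) = _
        rw [if_neg hn]
      rw [hfun]
      have : wkbD H z₀ ε s (n + 1) z = H z * wkbW H z₀ ε s n z := by
        show (if n % 2 = 0 then _ else _) = _
        rw [if_neg hn]
      rw [this]
      exact hP

lemma wkbW_norm_bound {Ω : Set ℂ} (hΩo : IsOpen Ω) (hΩc : Convex ℝ Ω)
    {H : ℂ → ℂ} (hH : DifferentiableOn ℂ H Ω) {z₀ : ℂ} (hz₀ : z₀ ∈ Ω) (ε : ℝ) (s : ℂ)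
    {A : ℝ}
    (hker : ∀ z ∈ Ω, ∀ ζ ∈ Ω, ‖Complex.exp (s * 2 * (ζ - z) / (ε:ℂ)) * H ζ‖ ≤ A)
    (hHb : ∀ ζ ∈ Ω, ‖H ζ‖ ≤ A) :
    ∀ n, ∀ z ∈ Ω, ‖wkbW H z₀ ε s n z‖ ≤ (A * ‖z - z₀‖) ^ n / n.factorial := by
  have hA0 : 0 ≤ A := le_trans (norm_nonneg _) (hHb z₀ hz₀)
  intro n
  induction n with
  | zero => intro z hz; simp [wkbW]
  | succ n IH =>
    intro z hz
    have hwc : ∀ m, ContinuousOn (wkbW H z₀ ε s m) Ω := fun m w hw =>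
      ((wkbW_hasDerivAt hΩo hΩc hH hz₀ ε s m w hw).differentiableAt.continuousAt).continuousWithinAt
    have hmemt : ∀ t ∈ Set.Ioc (0:ℝ) 1, z₀ + (t:ℂ) * (z - z₀) ∈ Ω := fun t ht =>
      seg_mem hΩc hz₀ hz ht.1.le ht.2
    have hnrm : ∀ t ∈ Set.Ioc (0:ℝ) 1, ‖z₀ + (t:ℂ) * (z - z₀) - z₀‖ = t * ‖z - z₀‖ := by
      intro t ht
      rw [add_sub_cancel_left, norm_mul, Complex.norm_real, Real.norm_eq_abs,
        abs_of_pos ht.1]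
    set C : ℝ := A ^ (n + 1) * ‖z - z₀‖ ^ n / n.factorial with hC
    have hbnd : ∀ t ∈ Set.Ioc (0:ℝ) 1, ∀ x : ℂ,
        ‖x‖ ≤ A → ‖x * wkbW H z₀ ε s n (z₀ + (t:ℂ) * (z - z₀))‖ ≤ C * t ^ n := by
      intro t ht x hx
      have h1 := IH _ (hmemt t ht)
      rw [hnrm t ht] at h1
      calc ‖x * wkbW H z₀ ε s n (z₀ + (t:ℂ) * (z - z₀))‖
          = ‖x‖ * ‖wkbW H z₀ ε s n (z₀ + (t:ℂ) * (z - z₀))‖ := norm_mul _ _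
        _ ≤ A * ((A * (t * ‖z - z₀‖)) ^ n / n.factorial) := by
            refine mul_le_mul hx h1 (norm_nonneg _) hA0
        _ = C * t ^ n := by
            rw [hC, mul_pow, mul_pow]
            field_simp
            ring
    have hintC : IntervalIntegrable (fun t : ℝ => C * t ^ n) MeasureTheory.volume 0 1 :=
      (continuous_const.mul (continuous_pow n)).intervalIntegrable 0 1
    have hCn : 0 ≤ C := by positivity
    have habs : |∫ t in (0:ℝ)..1, C * t ^ n| = C / (n + 1) := by
      have h2 : (∫ t in (0:ℝ)..1, C * t ^ n) = C / (n + 1) := by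
        rw [intervalIntegral.integral_const_mul, integral_pow]
        norm_num
        ring
      rw [h2, _root_.abs_of_nonneg (by positivity)]
    have key : ∀ G : ℝ → ℂ, (∀ᵐ t ∂(MeasureTheory.volume.restrict (Set.uIoc (0:ℝ) 1)), ‖G t‖ ≤ C * t ^ n) →
        ‖(z - z₀) * ∫ t in (0:ℝ)..1, G t‖ ≤ (A * ‖z - z₀‖) ^ (n+1) / (n+1).factorial := by
      intro G hG
      calc ‖(z - z₀) * ∫ t in (0:ℝ)..1, G t‖
          = ‖z - z₀‖ * ‖∫ t in (0:ℝ)..1, G t‖ := norm_mul _ _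
        _ ≤ ‖z - z₀‖ * (C / (n + 1)) := by
            refine mul_le_mul_of_nonneg_left ?_ (norm_nonneg _)
            rw [← habs]
            exact intervalIntegral.norm_integral_le_abs_of_norm_le hG hintC
        _ = (A * ‖z - z₀‖) ^ (n+1) / (n+1).factorial := by
            rw [hC, Nat.factorial_succ, mul_pow]
            have h1 : (0:ℝ) < n.factorial := by positivity
            push_cast
            field_simp
            ring
    have hIoc : Set.uIoc (0:ℝ) 1 = Set.Ioc 0 1 := Set.uIoc_of_le (by norm_num)
    rcases Nat.even_or_odd n with he | ho
    · have hn : n % 2 = 0 := Nat.even_iff.mp he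
      have hrw : wkbW H z₀ ε s (n+1) z = (z - z₀) * ∫ t in (0:ℝ)..1,
          Complex.exp (s * 2 * ((z₀ + (t:ℂ) * (z - z₀)) - z) / (ε:ℂ)) *
            H (z₀ + (t:ℂ) * (z - z₀)) * wkbW H z₀ ε s n (z₀ + (t:ℂ) * (z - z₀)) := by
        simp only [wkbW, hn, reduceIte]
      rw [hrw]
      refine key _ ?_
      rw [hIoc, MeasureTheory.ae_restrict_iff' measurableSet_Ioc]
      refine Filter.Eventually.of_forall (fun t ht => ?_)
      exact hbnd t ht _ (hker z hz _ (hmemt t ht))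
    · have hn : n % 2 = 1 := Nat.odd_iff.mp ho
      have hrw : wkbW H z₀ ε s (n+1) z = (z - z₀) * ∫ t in (0:ℝ)..1,
          H (z₀ + (t:ℂ) * (z - z₀)) * wkbW H z₀ ε s n (z₀ + (t:ℂ) * (z - z₀)) := by
        simp only [wkbW, hn]
        norm_num
      rw [hrw]
      refine key _ ?_
      rw [hIoc, MeasureTheory.ae_restrict_iff' measurableSet_Ioc]
      refine Filter.Eventually.of_forall (fun t ht => ?_)
      exact hbnd t ht _ (hHb _ (hmemt t ht))

lemma wkb_sums_hasDerivAt {Ω : Set ℂ} (hΩo : IsOpen Ω) (hΩc : Convex ℝ Ω)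
    {H : ℂ → ℂ} (hH : DifferentiableOn ℂ H Ω) {b : ℂ} (hb : b ∈ Ω) (ε : ℝ) (s : ℂ)
    {A B : ℝ}
    (hker : ∀ z ∈ Ω, ∀ ζ ∈ Ω, ‖Complex.exp (s * 2 * (ζ - z) / (ε:ℂ)) * H ζ‖ ≤ A)
    (hHb : ∀ ζ ∈ Ω, ‖H ζ‖ ≤ A)
    (hB : ∀ z ∈ Ω, ‖z - b‖ ≤ B) (hB0 : 0 ≤ B) :
    ∀ z ∈ Ω,
      HasDerivAt (wkbEven H b ε s) (H z * wkbOdd H b ε s z) z ∧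
      HasDerivAt (wkbOdd H b ε s)
        (H z * wkbEven H b ε s z - s * 2 / (ε:ℂ) * wkbOdd H b ε s z) z ∧
      Summable (fun n => wkbW H b ε s (2*n) z) ∧
      Summable (fun n => wkbW H b ε s (2*n+1) z) := by
  have hA0 : 0 ≤ A := le_trans (norm_nonneg _) (hHb b hb)
  set u : ℕ → ℝ := fun m => (A * B) ^ m / m.factorial with hudef
  have hu : Summable u := Real.summable_pow_div_factorial (A * B)
  have hub : ∀ m, ∀ z ∈ Ω, ‖wkbW H b ε s m z‖ ≤ u m := by
    intro m z hz
    refine le_trans (wkbW_norm_bound hΩo hΩc hH hb ε s hker hHb m z hz) ?_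
    rw [hudef]
    have h1 : (A * ‖z - b‖) ^ m ≤ (A * B) ^ m :=
      pow_le_pow_left₀ (by positivity) (mul_le_mul_of_nonneg_left (hB z hz) hA0) m
    have h2 : (0:ℝ) < m.factorial := by positivity
    exact (div_le_div_iff_of_pos_right h2).mpr h1
  have h2n : Summable (fun n => u (2*n)) := hu.comp_injective (fun a b hab => by omega)
  have h2n1 : Summable (fun n => u (2*n+1)) := hu.comp_injective (fun a b hab => by omega)
  have hwe : ∀ z ∈ Ω, Summable (fun n => wkbW H b ε s (2*n) z) := fun z hz =>
    Summable.of_norm_bounded h2n (fun n => hub (2*n) z hz)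
  have hwo : ∀ z ∈ Ω, Summable (fun n => wkbW H b ε s (2*n+1) z) := fun z hz =>
    Summable.of_norm_bounded h2n1 (fun n => hub (2*n+1) z hz)
  have hder := wkbW_hasDerivAt hΩo hΩc hH hb ε s
  -- even sum
  set v : ℕ → ℝ := fun n => if n = 0 then 0 else A * u (2*(n-1)+1) with hvdef
  have hv : Summable v := by
    refine (summable_nat_add_iff 1).mp (((h2n1.mul_left A)).congr (fun m => ?_))
    simp [hvdef]
  have hDe : ∀ n, ∀ y ∈ Ω, ‖wkbD H b ε s (2*n) y‖ ≤ v n := by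
    intro n y hy
    cases n with
    | zero => simp [wkbD, hvdef]
    | succ m =>
      have hidx : 2*(m+1) = (2*m+1)+1 := by ring
      have hmod : (2*m+1) % 2 = 1 := by omega
      rw [hidx]
      have : wkbD H b ε s ((2*m+1)+1) y = H y * wkbW H b ε s (2*m+1) y := by
        simp [wkbD, hmod]
      rw [this, hvdef]
      simp only [Nat.succ_ne_zero, if_false, Nat.add_sub_cancel]
      rw [norm_mul]
      exact mul_le_mul (hHb y hy) (hub _ y hy) (norm_nonneg _)  hA0
  have hDesum : ∀ z ∈ Ω, Summable (fun n => wkbD H b ε s (2*n) z) := fun z hz =>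
    Summable.of_norm_bounded hv (fun n => hDe n z hz)
  have hEder : ∀ z ∈ Ω, HasDerivAt (wkbEven H b ε s) (∑' n, wkbD H b ε s (2*n) z) z := by
    intro z hz
    exact hasDerivAt_tsum_of_isPreconnected hv hΩo hΩc.isPreconnected
      (fun n y hy => hder (2*n) y hy) (fun n y hy => hDe n y hy) hb
      (hwe b hb) hz
  have hEval : ∀ z ∈ Ω, (∑' n, wkbD H b ε s (2*n) z) = H z * wkbOdd H b ε s z := by
    intro z hz
    rw [Summable.tsum_eq_zero_add (hDesum z hz)]
    have h00 : wkbD H b ε s (2*0) z = 0 := by simp [wkbD]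
    rw [h00, zero_add]
    have hterm : ∀ n : ℕ, wkbD H b ε s (2*(n+1)) z = H z * wkbW H b ε s (2*n+1) z := by
      intro n
      have hidx : 2*(n+1) = (2*n+1)+1 := by ring
      have hmod : (2*n+1) % 2 = 1 := by omega
      rw [hidx]
      simp [wkbD, hmod]
    rw [tsum_congr hterm, tsum_mul_left]
    rfl
  -- odd sum
  set v' : ℕ → ℝ := fun n => A * u (2*n) + ‖s * 2 / (ε:ℂ)‖ * u (2*n+1) with hv'def
  have hv' : Summable v' := (h2n.mul_left A).add (h2n1.mul_left _)
  have hDo : ∀ n, ∀ y ∈ Ω, ‖wkbD H b ε s (2*n+1) y‖ ≤ v' n := by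
    intro n y hy
    have hmod : (2*n) % 2 = 0 := by omega
    have : wkbD H b ε s ((2*n)+1) y =
        H y * wkbW H b ε s (2*n) y - s * 2 / (ε:ℂ) * wkbW H b ε s (2*n+1) y := by
      simp [wkbD, hmod]
    rw [this, hv'def]
    refine le_trans (norm_sub_le _ _) ?_
    rw [norm_mul, norm_mul]
    exact add_le_add (mul_le_mul (hHb y hy) (hub _ y hy) (norm_nonneg _) hA0)
      (mul_le_mul_of_nonneg_left (hub _ y hy) (norm_nonneg _))
  have hDosum : ∀ z ∈ Ω, Summable (fun n => wkbD H b ε s (2*n+1) z) := fun z hz =>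
    Summable.of_norm_bounded hv' (fun n => hDo n z hz)
  have hOder : ∀ z ∈ Ω, HasDerivAt (wkbOdd H b ε s) (∑' n, wkbD H b ε s (2*n+1) z) z := by
    intro z hz
    exact hasDerivAt_tsum_of_isPreconnected hv' hΩo hΩc.isPreconnected
      (fun n y hy => hder (2*n+1) y hy) (fun n y hy => hDo n y hy) hb
      (hwo b hb) hz
  have hOval : ∀ z ∈ Ω, (∑' n, wkbD H b ε s (2*n+1) z) =
      H z * wkbEven H b ε s z - s * 2 / (ε:ℂ) * wkbOdd H b ε s z := by
    intro z hz
    have hterm : ∀ n : ℕ, wkbD H b ε s (2*n+1) z =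
        H z * wkbW H b ε s (2*n) z - s * 2 / (ε:ℂ) * wkbW H b ε s (2*n+1) z := by
      intro n
      have hmod : (2*n) % 2 = 0 := by omega
      simp [wkbD, hmod]
    rw [tsum_congr hterm, Summable.tsum_sub ((hwe z hz).mul_left _) ((hwo z hz).mul_left _),
      tsum_mul_left, tsum_mul_left]
    rfl
  intro z hz
  refine ⟨?_, ?_, hwe z hz, hwo z hz⟩
  · have := hEder z hz; rwa [hEval z hz] at this
  · have := hOder z hz; rwa [hOval z hz] at this


/-- The Wronskian identity for exact WKB solutions: for the `+`
recursion based at `z₀` and the `-` recursion based at `z₁`,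
`w⁺_odd(z;z₀) w⁻_odd(z;z₁) - w⁺_even(z;z₀) w⁻_even(z;z₁) = -w⁺_even(z₁;z₀)`
for every `z ∈ Ω`; in particular the left-hand side is independent of `z`. -/
theorem wkb_wronskian_identity
    (Ω : Set ℂ) (hΩopen : IsOpen Ω) (hΩbdd : Bornology.IsBounded Ω)
    (hΩconv : Convex ℝ Ω)
    (H : ℂ → ℂ) (hH : DifferentiableOn ℂ H Ω)
    (hHbdd : ∃ M, ∀ ζ ∈ Ω, ‖H ζ‖ ≤ M)
    (z₀ z₁ : ℂ) (hz₀ : z₀ ∈ Ω) (hz₁ : z₁ ∈ Ω)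
    (ε : ℝ) (hε : 0 < ε) :
    ∀ z ∈ Ω,
      wkbOdd H z₀ ε 1 z * wkbOdd H z₁ ε (-1) z -
          wkbEven H z₀ ε 1 z * wkbEven H z₁ ε (-1) z =
        -wkbEven H z₀ ε 1 z₁ := by
  obtain ⟨M, hM⟩ := hHbdd
  obtain ⟨R, hR⟩ := hΩbdd.subset_closedBall 0
  have hnrm : ∀ z ∈ Ω, ‖z‖ ≤ R := fun z hz => by
    simpa using mem_closedBall_iff_norm.mp (hR hz)
  have hR0 : 0 ≤ R := le_trans (norm_nonneg _) (hnrm z₀ hz₀)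
  have hdist : ∀ z ∈ Ω, ∀ w ∈ Ω, ‖z - w‖ ≤ 2 * R := fun z hz w hw =>
    le_trans (norm_sub_le _ _) (by linarith [hnrm z hz, hnrm w hw])
  set M' : ℝ := max M 0 with hM'def
  have hM' : ∀ ζ ∈ Ω, ‖H ζ‖ ≤ M' := fun ζ hζ =>
    le_trans (by simpa using hM ζ hζ) (le_max_left _ _)
  have hM'0 : 0 ≤ M' := le_max_right _ _
  set E : ℝ := Real.exp (4 * R / ε) with hEdef
  have hE1 : 1 ≤ E := by
    rw [hEdef, ← Real.exp_zero]
    exact Real.exp_le_exp.mpr (by positivity)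
  set A : ℝ := E * M' with hAdef
  have hHA : ∀ ζ ∈ Ω, ‖H ζ‖ ≤ A := fun ζ hζ =>
    le_trans (hM' ζ hζ) (le_mul_of_one_le_left hM'0 hE1)
  have hker : ∀ s : ℂ, ‖s‖ = 1 → ∀ z ∈ Ω, ∀ ζ ∈ Ω,
      ‖Complex.exp (s * 2 * (ζ - z) / (ε:ℂ)) * H ζ‖ ≤ A := by
    intro s hs z hz ζ hζ
    have h1 : ‖s * 2 * (ζ - z) / (ε:ℂ)‖ ≤ 4 * R / ε := by
      rw [norm_div, norm_mul, norm_mul, hs]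
      have h2 : ‖(2:ℂ)‖ = 2 := by norm_num
      have h3 : ‖(ε:ℂ)‖ = ε := by
        rw [Complex.norm_real, Real.norm_eq_abs, abs_of_pos hε]
      rw [h2, h3, one_mul]
      have h4 : ‖ζ - z‖ ≤ 2 * R := hdist ζ hζ z hz
      exact (div_le_div_iff_of_pos_right hε).mpr (by linarith)
    have h5 : ‖Complex.exp (s * 2 * (ζ - z) / (ε:ℂ))‖ ≤ E := by
      rw [Complex.norm_exp, hEdef]
      refine Real.exp_le_exp.mpr (le_trans (Complex.re_le_norm _) ?_)
      exact h1
    rw [norm_mul, hAdef]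
    exact mul_le_mul h5 (hM' ζ hζ) (norm_nonneg _) (by linarith)
  have hB0 : (0:ℝ) ≤ 2 * R := by linarith
  have hplus := wkb_sums_hasDerivAt hΩopen hΩconv hH hz₀ ε 1
    (hker 1 (by norm_num)) hHA (fun z hz => hdist z hz z₀ hz₀) hB0
  have hminus := wkb_sums_hasDerivAt hΩopen hΩconv hH hz₁ ε (-1)
    (hker (-1) (by norm_num)) hHA (fun z hz => hdist z hz z₁ hz₁) hB0
  set F : ℂ → ℂ := fun z => wkbOdd H z₀ ε 1 z * wkbOdd H z₁ ε (-1) z -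
      wkbEven H z₀ ε 1 z * wkbEven H z₁ ε (-1) z with hFdef
  have hF0 : ∀ z ∈ Ω, HasDerivAt F 0 z := by
    intro z hz
    obtain ⟨hEp, hOp, -, -⟩ := hplus z hz
    obtain ⟨hEm, hOm, -, -⟩ := hminus z hz
    exact ((hOp.mul hOm).sub (hEp.mul hEm)).congr_deriv (by ring)
  have hFdiff : DifferentiableOn ℂ F Ω := fun w hw =>
    ((hF0 w hw).differentiableAt).differentiableWithinAt
  have hfz : ∀ w ∈ Ω, fderivWithin ℂ F Ω w = 0 := by
    intro w hw
    rw [fderivWithin_eq_fderiv (hΩopen.uniqueDiffOn w hw) (hF0 w hw).differentiableAt,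
      (hF0 w hw).hasFDerivAt.fderiv]
    ext x
    simp
  -- value at z₁
  have hW0 : ∀ n : ℕ, wkbW H z₁ ε (-1) (n + 1) z₁ = 0 := by
    intro n
    show (if n % 2 = 0 then _ else _ : ℂ) = 0
    split <;> simp
  have hOm1 : wkbOdd H z₁ ε (-1) z₁ = 0 := by
    show (∑' n : ℕ, wkbW H z₁ ε (-1) (2 * n + 1) z₁) = 0
    rw [tsum_congr (fun n => hW0 (2 * n))]
    exact tsum_zero
  have hEm1 : wkbEven H z₁ ε (-1) z₁ = 1 := by
    show (∑' n : ℕ, wkbW H z₁ ε (-1) (2 * n) z₁) = 1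
    rw [tsum_eq_single 0 (fun n hn => ?_)]
    · show wkbW H z₁ ε (-1) 0 z₁ = 1
      rfl
    · obtain ⟨m, rfl⟩ : ∃ m, n = m + 1 := ⟨n - 1, by omega⟩
      have hidx : 2 * (m + 1) = (2 * m + 1) + 1 := by ring
      rw [hidx]
      exact hW0 (2 * m + 1)
  have hFz₁ : F z₁ = -wkbEven H z₀ ε 1 z₁ := by
    rw [hFdef]
    simp only [hOm1, hEm1, mul_zero, zero_mul, mul_one, zero_sub]
  intro z hz
  have hconst : F z = F z₁ :=
    hΩconv.is_const_of_fderivWithin_eq_zero hFdiff hfz hz hz₁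
  calc wkbOdd H z₀ ε 1 z * wkbOdd H z₁ ε (-1) z -
          wkbEven H z₀ ε 1 z * wkbEven H z₁ ε (-1) z
      = F z := rfl
    _ = F z₁ := hconst
    _ = -wkbEven H z₀ ε 1 z₁ := hFz₁
end
end

section
/- Let N ∈ ℕ, let λ₁,…,λ_N and λ'₁,…,λ'_N be complex numbers, let λ ∈ ℂ, and let r > 0 and η ≥ 0 satisfy |λ_n − λ'_n| ≤ η for all n and |λ − λ_n| ≥ r, |λ − conj(λ_n)| ≥ r, |λ − λ'_n| ≥ r, |λ − conj(λ'_n)| ≥ r for all n. Then the ratio of the two Blaschke-type products satisfies | Π_{n=1}^{N} [ (λ − conj(λ_n))(λ − λ'_n) ] / [ (λ − λ_n)(λ − conj(λ'_n)) ] − 1 | ≤ (2Nη/r) e^{2Nη/r}. In particular, if N = O(1/ε), η = o(ε) and r is bounded below independently of ε, then Π_{n}(λ−conj(λ_n))/(λ−λ_n) = Π_{n}(λ−conj(λ'_n))/(λ−λ'_n) · (1+o(1)) as ε→0. -/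
open Complex Finset

noncomputable section

lemma abs_prod_sub_one_le {ι : Type*} (s : Finset ι) (a : ι → ℂ) (t : ι → ℝ)
    (ht : ∀ i ∈ s, 0 ≤ t i)
    (h : ∀ i ∈ s, ‖a i - 1‖ ≤ Real.exp (t i) - 1) :
    ‖(∏ i ∈ s, a i) - 1‖ ≤ Real.exp (∑ i ∈ s, t i) - 1 := by
  induction s using Finset.cons_induction with
  | empty => simp
  | cons i s his ih =>
    rw [Finset.prod_cons, Finset.sum_cons]
    have ht' : ∀ j ∈ s, 0 ≤ t j := fun j hj => ht j (Finset.mem_cons_of_mem hj)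
    have h' : ∀ j ∈ s, ‖a j - 1‖ ≤ Real.exp (t j) - 1 :=
      fun j hj => h j (Finset.mem_cons_of_mem hj)
    have hP := ih ht' h'
    have hai : ‖a i - 1‖ ≤ Real.exp (t i) - 1 :=
      h i (Finset.mem_cons_self i s)
    have hai' : ‖a i‖ ≤ Real.exp (t i) := by
      calc ‖a i‖ = ‖(a i - 1) + 1‖ := by ring_nf
        _ ≤ ‖a i - 1‖ + ‖(1:ℂ)‖ := norm_add_le _ _
        _ ≤ Real.exp (t i) := by simp only [norm_one]; linarith
    have key : a i * ∏ j ∈ s, a j - 1 = a i * ((∏ j ∈ s, a j) - 1) + (a i - 1) := by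
      ring
    rw [key]
    calc ‖a i * ((∏ j ∈ s, a j) - 1) + (a i - 1)‖
        ≤ ‖a i‖ * ‖(∏ j ∈ s, a j) - 1‖ + ‖a i - 1‖ := by
          refine le_trans (norm_add_le _ _) ?_
          rw [norm_mul]
      _ ≤ Real.exp (t i) * (Real.exp (∑ j ∈ s, t j) - 1) + (Real.exp (t i) - 1) := by
          have h1 : (0:ℝ) ≤ ‖a i‖ := norm_nonneg _
          have h2 : (0:ℝ) ≤ Real.exp (∑ j ∈ s, t j) - 1 := by
            have : (0:ℝ) ≤ ∑ j ∈ s, t j := Finset.sum_nonneg ht'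
            have := Real.one_le_exp this
            linarith
          have := mul_le_mul hai' hP (norm_nonneg _) (Real.exp_pos _).le
          linarith
      _ = Real.exp (t i + ∑ j ∈ s, t j) - 1 := by
          rw [Real.exp_add]; ring

/-- Perturbation estimate for Blaschke-type products: if
`|λ_n - λ'_n| ≤ η` and `λ` keeps distance `≥ r` from all `λ_n`, `conj λ_n`,
`λ'_n`, `conj λ'_n`, then the ratio of the two Blaschke products differs from
`1` by at most `(2Nη/r) e^{2Nη/r}`. -/
theorem blaschke_product_perturbation
    (N : ℕ) (lam' lam'' : Fin N → ℂ) (lam : ℂ) (r η : ℝ)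
    (hr : 0 < r) (hη : 0 ≤ η)
    (hclose : ∀ n : Fin N, ‖lam' n - lam'' n‖ ≤ η)
    (hsep : ∀ n : Fin N,
      r ≤ ‖lam - lam' n‖ ∧
      r ≤ ‖lam - (starRingEnd ℂ) (lam' n)‖ ∧
      r ≤ ‖lam - lam'' n‖ ∧
      r ≤ ‖lam - (starRingEnd ℂ) (lam'' n)‖) :
    ‖(∏ n : Fin N,
          ((lam - (starRingEnd ℂ) (lam' n)) * (lam - lam'' n)) /
            ((lam - lam' n) * (lam - (starRingEnd ℂ) (lam'' n)))) - 1‖ ≤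
      (2 * N * η / r) * Real.exp (2 * N * η / r) := by
  set x : ℝ := η / r with hx
  have hx0 : 0 ≤ x := div_nonneg hη hr.le
  -- per-factor bound
  have factor : ∀ n : Fin N,
      ‖((lam - (starRingEnd ℂ) (lam' n)) * (lam - lam'' n)) /
          ((lam - lam' n) * (lam - (starRingEnd ℂ) (lam'' n))) - 1‖
      ≤ Real.exp (2 * x) - 1 := by
    intro n
    obtain ⟨h1, h2, h3, h4⟩ := hsep n
    have d1 : lam - lam' n ≠ 0 := by
      intro h; rw [h] at h1; simp at h1; linarith
    have d2 : lam - (starRingEnd ℂ) (lam' n) ≠ 0 := by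
      intro h; rw [h] at h2; simp at h2; linarith
    have d3 : lam - lam'' n ≠ 0 := by
      intro h; rw [h] at h3; simp at h3; linarith
    have d4 : lam - (starRingEnd ℂ) (lam'' n) ≠ 0 := by
      intro h; rw [h] at h4; simp at h4; linarith
    set u : ℂ := (lam - (starRingEnd ℂ) (lam' n)) / (lam - (starRingEnd ℂ) (lam'' n)) with hu
    set v : ℂ := (lam - lam'' n) / (lam - lam' n) with hv
    have hsplit :
        ((lam - (starRingEnd ℂ) (lam' n)) * (lam - lam'' n)) /
          ((lam - lam' n) * (lam - (starRingEnd ℂ) (lam'' n))) = u * v := by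
      rw [hu, hv]; field_simp
    have hu1 : ‖u - 1‖ ≤ x := by
      rw [hu, div_sub_one d4]
      have heq : lam - (starRingEnd ℂ) (lam' n) - (lam - (starRingEnd ℂ) (lam'' n))
          = (starRingEnd ℂ) (lam'' n - lam' n) := by
        rw [map_sub]; ring
      rw [norm_div, heq, Complex.norm_conj]
      have : ‖lam'' n - lam' n‖ ≤ η := by
        rw [← norm_neg]; simpa using hclose n
      exact div_le_div₀ hη this hr h4
    have hv1 : ‖v - 1‖ ≤ x := by
      rw [hv, div_sub_one d1]
      have heq : lam - lam'' n - (lam - lam' n) = lam' n - lam'' n := by ring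
      rw [norm_div, heq]
      exact div_le_div₀ hη (hclose n) hr h1
    rw [hsplit]
    have key : u * v - 1 = (u - 1) * (v - 1) + (u - 1) + (v - 1) := by ring
    rw [key]
    have hbound : ‖(u - 1) * (v - 1) + (u - 1) + (v - 1)‖
        ≤ x * x + x + x := by
      calc ‖(u - 1) * (v - 1) + (u - 1) + (v - 1)‖
          ≤ ‖(u - 1) * (v - 1)‖ + ‖u - 1‖ + ‖v - 1‖ := by
            refine le_trans (norm_add_le _ _) ?_
            have := norm_add_le ((u - 1) * (v - 1)) (u - 1)
            linarith
        _ ≤ x * x + x + x := by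
            rw [norm_mul]
            have := mul_le_mul hu1 hv1 (norm_nonneg _) hx0
            linarith
    refine hbound.trans ?_
    have hexp : Real.exp (2 * x) = Real.exp x * Real.exp x := by
      rw [← Real.exp_add]; ring_nf
    nlinarith [Real.add_one_le_exp x, Real.exp_pos x, sq_nonneg x]
  have main := abs_prod_sub_one_le Finset.univ
    (fun n : Fin N =>
      ((lam - (starRingEnd ℂ) (lam' n)) * (lam - lam'' n)) /
        ((lam - lam' n) * (lam - (starRingEnd ℂ) (lam'' n))))
    (fun _ => 2 * x)
    (fun n _ => by positivity)
    (fun n _ => factor n)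
  have hsum : ∑ _n : Fin N, (2 * x) = 2 * N * η / r := by
    rw [Finset.sum_const, Finset.card_univ, Fintype.card_fin, nsmul_eq_mul, hx]
    ring
  rw [hsum] at main
  refine main.trans ?_
  set T : ℝ := 2 * N * η / r with hT
  have hT0 : 0 ≤ T := by positivity
  have h1 : Real.exp (-T) * Real.exp T = 1 := by rw [← Real.exp_add]; simp
  have h2 : -T + 1 ≤ Real.exp (-T) := Real.add_one_le_exp (-T)
  nlinarith [mul_le_mul_of_nonneg_right h2 (Real.exp_pos T).le]
end
end
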